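/- The greedy choice function with transferable quotas is monotone with respect to quotas: if each grade group's quota is pointwise increased, the set of chosen children weakly grows in cardinality. -/

import Mathlib

/-- Greedy choice: process children in priority order (the list `order`),
    accept a child from the applicant set iff its grade group's accepted
    count is still below the group's transferable quota. -/
def greedyAux {Child ι : Type} [DecidableEq Child] [DecidableEq ι]
    (group : Child → ι) (quota : ι → ℕ) :
    List Child → Finset Child → Finset Child → Finset Child
  | [], _, acc => acc
  | c :: rest, C', acc =>
      if c ∈ C' ∧ (acc.filter (fun x => group x = group c)).card < quota (group c)
      then greedyAux group quota rest C' (insert c acc)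
      else greedyAux group quota rest C' acc

/-- The choice function `Ch_d` of a daycare with priority list `order`,
    grade-group map `group` and transferable quotas `quota`. -/
def choice {Child ι : Type} [DecidableEq Child] [DecidableEq ι]
    (group : Child → ι) (quota : ι → ℕ) (order : List Child) (C' : Finset Child) :
    Finset Child :=
  greedyAux group quota order C' ∅

private lemma filter_insert_card {Child ι : Type} [DecidableEq Child] [DecidableEq ι]
    (group : Child → ι) (c : Child) (acc : Finset Child) (hc : c ∉ acc) (i : ι) :
    ((insert c acc).filter (fun x => group x = i)).card
      = (acc.filter (fun x => group x = i)).card + (if group c = i then 1 else 0) := by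
  rw [Finset.filter_insert]
  split
  · rw [Finset.card_insert_of_notMem (by simp [hc])]
  · simp

private lemma greedy_subset {Child ι : Type} [DecidableEq Child] [DecidableEq ι]
    (group : Child → ι) (quota quota' : ι → ℕ) (hQ : ∀ i, quota i ≤ quota' i)
    (C' : Finset Child) :
    ∀ (l : List Child), l.Nodup → ∀ (acc acc' : Finset Child),
      (∀ x ∈ acc', x ∉ l) → acc ⊆ acc' →
      (∀ i, (acc'.filter (fun x => group x = i)).card + quota i
          ≤ (acc.filter (fun x => group x = i)).card + quota' i) →
      greedyAux group quota l C' acc ⊆ greedyAux group quota' l C' acc' := by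
  intro l
  induction l with
  | nil => intro _ acc acc' _ hsub _; simpa [greedyAux] using hsub
  | cons c rest ih =>
    intro hnd acc acc' hnotin hsub hcnt
    have hndr : rest.Nodup := (List.nodup_cons.mp hnd).2
    have hcrest : c ∉ rest := (List.nodup_cons.mp hnd).1
    have hcacc' : c ∉ acc' := fun h => (hnotin c h) (List.mem_cons_self (a := c) (l := rest))
    have hcacc : c ∉ acc := fun h => hcacc' (hsub h)
    simp only [greedyAux]
    by_cases hsmall : c ∈ C' ∧ (acc.filter (fun x => group x = group c)).card < quota (group c)
    · -- small accepts, so big accepts too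
      have hbig : (acc'.filter (fun x => group x = group c)).card < quota' (group c) := by
        have := hcnt (group c)
        omega
      rw [if_pos hsmall, if_pos ⟨hsmall.1, hbig⟩]
      apply ih hndr
      · intro x hx
        rcases Finset.mem_insert.mp hx with rfl | hx
        · exact hcrest
        · exact fun h => hnotin x hx (List.mem_cons_of_mem _ h)
      · exact Finset.insert_subset_insert _ hsub
      · intro i
        rw [filter_insert_card group c acc hcacc i,
            filter_insert_card group c acc' hcacc' i]
        have := hcnt i
        omega
    · rw [if_neg hsmall]
      by_cases hbig : c ∈ C' ∧ (acc'.filter (fun x => group x = group c)).card < quota' (group c)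
      · rw [if_pos hbig]
        apply ih hndr
        · intro x hx
          rcases Finset.mem_insert.mp hx with rfl | hx
          · exact hcrest
          · exact fun h => hnotin x hx (List.mem_cons_of_mem _ h)
        · exact hsub.trans (Finset.subset_insert _ _)
        · intro i
          rw [filter_insert_card group c acc' hcacc' i]
          have h1 := hcnt i
          by_cases hgi : group c = i
          · subst hgi
            -- small rejected though c ∈ C', so count ≥ quota
            have hge : quota (group c) ≤ (acc.filter (fun x => group x = group c)).card := by
              by_contra h
              exact hsmall ⟨hbig.1, by omega⟩
            have := hbig.2
            simp only [if_pos rfl, if_true]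
            omega
          · simp only [if_neg hgi]
            omega
      · rw [if_neg hbig]
        apply ih hndr
        · exact fun x hx h => hnotin x hx (List.mem_cons_of_mem _ h)
        · exact hsub
        · exact hcnt

/-- the greedy choice function is monotone with respect to quotas:
    pointwise increasing every grade group's quota weakly increases the number
    of chosen children. -/
theorem choice_card_mono_quota {Child ι : Type} [DecidableEq Child] [DecidableEq ι]
    (order : List Child) (horder : order.Nodup)
    (group : Child → ι) (quota quota' : ι → ℕ)
    (hQ : ∀ i, quota i ≤ quota' i)
    (C' : Finset Child) (hC' : ∀ c ∈ C', c ∈ order) :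
    (choice group quota order C').card ≤ (choice group quota' order C').card := by
  apply Finset.card_le_card
  apply greedy_subset group quota quota' hQ C' order horder ∅ ∅
  · simp
  · exact Finset.Subset.refl _
  · intro i; simpa using hQ i
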